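/- Let F : C → D be a Frobenius monoidal functor between monoidal categories, and suppose X ∈ C has a left dual (X^L, ev : X^L ⊗ X → 1, coev : 1 → X ⊗ X^L). Then F(X^L) is a left dual of F(X) in D, with evaluation F₋₀ ∘ F(ev) ∘ F₂ : F(X^L) ⊗ F(X) → 1' and coevaluation F₋₂ ∘ F(coev) ∘ F₀ : 1' → F(X) ⊗ F(X^L). -/

import Mathlib

open CategoryTheory MonoidalCategory

/-- A Frobenius monoidal functor `F : C ⥤ D` (a functor with a lax
monoidal structure `(μ, η)` and an oplax monoidal structure `(δ, ν)` satisfying the two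
Frobenius compatibility conditions) preserves left duals: if `(Y, ev, coev)` exhibits `Y`
as a left dual of `X` in `C`, then `F Y` is a left dual of `F X` in `D`, with evaluation
`μ ≫ F.map ev ≫ ν` and coevaluation `η ≫ F.map coev ≫ δ` (i.e. these satisfy the zigzag
identities). -/
theorem frobenius_monoidal_preserves_left_duals
    {C D : Type*} [Category C] [Category D] [MonoidalCategory C] [MonoidalCategory D]
    (F : C ⥤ D)
    (μ : ∀ X Y : C, F.obj X ⊗ F.obj Y ⟶ F.obj (X ⊗ Y))
    (η : 𝟙_ D ⟶ F.obj (𝟙_ C))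
    (δ : ∀ X Y : C, F.obj (X ⊗ Y) ⟶ F.obj X ⊗ F.obj Y)
    (ν : F.obj (𝟙_ C) ⟶ 𝟙_ D)
    -- naturality of the lax and oplax structures
    (μ_nat : ∀ {X Y X' Y' : C} (f : X ⟶ X') (g : Y ⟶ Y'),
      (F.map f ⊗ₘ F.map g) ≫ μ X' Y' = μ X Y ≫ F.map (f ⊗ₘ g))
    (δ_nat : ∀ {X Y X' Y' : C} (f : X ⟶ X') (g : Y ⟶ Y'),
      F.map (f ⊗ₘ g) ≫ δ X' Y' = δ X Y ≫ (F.map f ⊗ₘ F.map g))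
    -- lax associativity and unitality
    (μ_assoc : ∀ X Y Z : C,
      (μ X Y ▷ F.obj Z) ≫ μ (X ⊗ Y) Z ≫ F.map (α_ X Y Z).hom
        = (α_ (F.obj X) (F.obj Y) (F.obj Z)).hom ≫ (F.obj X ◁ μ Y Z) ≫ μ X (Y ⊗ Z))
    (μ_unit_left : ∀ X : C,
      (η ▷ F.obj X) ≫ μ (𝟙_ C) X ≫ F.map (λ_ X).hom = (λ_ (F.obj X)).hom)
    (μ_unit_right : ∀ X : C,
      (F.obj X ◁ η) ≫ μ X (𝟙_ C) ≫ F.map (ρ_ X).hom = (ρ_ (F.obj X)).hom)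
    -- oplax associativity and unitality
    (δ_assoc : ∀ X Y Z : C,
      F.map (α_ X Y Z).hom ≫ δ X (Y ⊗ Z) ≫ (F.obj X ◁ δ Y Z)
        = δ (X ⊗ Y) Z ≫ (δ X Y ▷ F.obj Z) ≫ (α_ (F.obj X) (F.obj Y) (F.obj Z)).hom)
    (δ_unit_left : ∀ X : C,
      F.map (λ_ X).inv ≫ δ (𝟙_ C) X ≫ (ν ▷ F.obj X) = (λ_ (F.obj X)).inv)
    (δ_unit_right : ∀ X : C,
      F.map (ρ_ X).inv ≫ δ X (𝟙_ C) ≫ (F.obj X ◁ ν) = (ρ_ (F.obj X)).inv)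
    -- the two Frobenius conditions
    (frob₁ : ∀ X Y Z : C,
      μ (X ⊗ Y) Z ≫ F.map (α_ X Y Z).hom ≫ δ X (Y ⊗ Z)
        = (δ X Y ▷ F.obj Z) ≫ (α_ (F.obj X) (F.obj Y) (F.obj Z)).hom ≫ (F.obj X ◁ μ Y Z))
    (frob₂ : ∀ X Y Z : C,
      μ X (Y ⊗ Z) ≫ F.map (α_ X Y Z).inv ≫ δ (X ⊗ Y) Z
        = (F.obj X ◁ δ Y Z) ≫ (α_ (F.obj X) (F.obj Y) (F.obj Z)).inv ≫ (μ X Y ▷ F.obj Z))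
    -- a left dual (Y, ev, coev) of X in C
    (X Y : C) (ev : Y ⊗ X ⟶ 𝟙_ C) (coev : 𝟙_ C ⟶ X ⊗ Y)
    (zig₁ : (Y ◁ coev) ≫ (α_ Y X Y).inv ≫ (ev ▷ Y) = (ρ_ Y).hom ≫ (λ_ Y).inv)
    (zig₂ : (coev ▷ X) ≫ (α_ X Y X).hom ≫ (X ◁ ev) = (λ_ X).hom ≫ (ρ_ X).inv) :
    -- then (F Y, Ev, Coev) is a left dual of F X in D
    ((F.obj Y ◁ (η ≫ F.map coev ≫ δ X Y)) ≫ (α_ (F.obj Y) (F.obj X) (F.obj Y)).inv ≫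
        ((μ Y X ≫ F.map ev ≫ ν) ▷ F.obj Y)
      = (ρ_ (F.obj Y)).hom ≫ (λ_ (F.obj Y)).inv) ∧
    (((η ≫ F.map coev ≫ δ X Y) ▷ F.obj X) ≫ (α_ (F.obj X) (F.obj Y) (F.obj X)).hom ≫
        (F.obj X ◁ (μ Y X ≫ F.map ev ≫ ν))
      = (λ_ (F.obj X)).hom ≫ (ρ_ (F.obj X)).inv) := by

  have n1 : (F.obj Y ◁ F.map coev) ≫ μ Y (X ⊗ Y) = μ Y (𝟙_ C) ≫ F.map (Y ◁ coev) := by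
    have h := μ_nat (𝟙 Y) coev
    simpa using h
  have n2 : δ (Y ⊗ X) Y ≫ (F.map ev ▷ F.obj Y) = F.map (ev ▷ Y) ≫ δ (𝟙_ C) Y := by
    have h := (δ_nat ev (𝟙 Y)).symm
    simpa using h
  have n3 : (F.map coev ▷ F.obj X) ≫ μ (X ⊗ Y) X = μ (𝟙_ C) X ≫ F.map (coev ▷ X) := by
    have h := μ_nat coev (𝟙 X)
    simpa using h
  have n4 : δ X (Y ⊗ X) ≫ (F.obj X ◁ F.map ev) = F.map (X ◁ ev) ≫ δ X (𝟙_ C) := by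
    have h := (δ_nat (𝟙 X) ev).symm
    simpa using h
  constructor
  · calc (F.obj Y ◁ (η ≫ F.map coev ≫ δ X Y)) ≫ (α_ (F.obj Y) (F.obj X) (F.obj Y)).inv ≫
        ((μ Y X ≫ F.map ev ≫ ν) ▷ F.obj Y)
        = (F.obj Y ◁ η) ≫ (F.obj Y ◁ F.map coev) ≫
            ((F.obj Y ◁ δ X Y) ≫ (α_ (F.obj Y) (F.obj X) (F.obj Y)).inv ≫
              (μ Y X ▷ F.obj Y)) ≫
            (F.map ev ▷ F.obj Y) ≫ (ν ▷ F.obj Y) := by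
          simp [MonoidalCategory.whiskerLeft_comp, MonoidalCategory.comp_whiskerRight]
      _ = (F.obj Y ◁ η) ≫ (F.obj Y ◁ F.map coev) ≫
            (μ Y (X ⊗ Y) ≫ F.map (α_ Y X Y).inv ≫ δ (Y ⊗ X) Y) ≫
            (F.map ev ▷ F.obj Y) ≫ (ν ▷ F.obj Y) := by rw [frob₂]
      _ = (F.obj Y ◁ η) ≫ μ Y (𝟙_ C) ≫ F.map (Y ◁ coev) ≫ F.map (α_ Y X Y).inv ≫
            (δ (Y ⊗ X) Y ≫ (F.map ev ▷ F.obj Y)) ≫ (ν ▷ F.obj Y) := by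
          rw [← reassoc_of% n1]; simp
      _ = (F.obj Y ◁ η) ≫ μ Y (𝟙_ C) ≫ F.map (Y ◁ coev) ≫ F.map (α_ Y X Y).inv ≫
            F.map (ev ▷ Y) ≫ δ (𝟙_ C) Y ≫ (ν ▷ F.obj Y) := by rw [n2]; simp
      _ = (F.obj Y ◁ η) ≫ μ Y (𝟙_ C) ≫ F.map ((Y ◁ coev) ≫ (α_ Y X Y).inv ≫ (ev ▷ Y)) ≫
            δ (𝟙_ C) Y ≫ (ν ▷ F.obj Y) := by simp
      _ = ((F.obj Y ◁ η) ≫ μ Y (𝟙_ C) ≫ F.map (ρ_ Y).hom) ≫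
            (F.map (λ_ Y).inv ≫ δ (𝟙_ C) Y ≫ (ν ▷ F.obj Y)) := by rw [zig₁]; simp
      _ = (ρ_ (F.obj Y)).hom ≫ (λ_ (F.obj Y)).inv := by
          rw [μ_unit_right, δ_unit_left]
  · calc ((η ≫ F.map coev ≫ δ X Y) ▷ F.obj X) ≫ (α_ (F.obj X) (F.obj Y) (F.obj X)).hom ≫
        (F.obj X ◁ (μ Y X ≫ F.map ev ≫ ν))
        = (η ▷ F.obj X) ≫ (F.map coev ▷ F.obj X) ≫
            ((δ X Y ▷ F.obj X) ≫ (α_ (F.obj X) (F.obj Y) (F.obj X)).hom ≫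
              (F.obj X ◁ μ Y X)) ≫
            (F.obj X ◁ F.map ev) ≫ (F.obj X ◁ ν) := by
          simp [MonoidalCategory.whiskerLeft_comp, MonoidalCategory.comp_whiskerRight]
      _ = (η ▷ F.obj X) ≫ (F.map coev ▷ F.obj X) ≫
            (μ (X ⊗ Y) X ≫ F.map (α_ X Y X).hom ≫ δ X (Y ⊗ X)) ≫
            (F.obj X ◁ F.map ev) ≫ (F.obj X ◁ ν) := by rw [frob₁]
      _ = (η ▷ F.obj X) ≫ μ (𝟙_ C) X ≫ F.map (coev ▷ X) ≫ F.map (α_ X Y X).hom ≫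
            (δ X (Y ⊗ X) ≫ (F.obj X ◁ F.map ev)) ≫ (F.obj X ◁ ν) := by
          rw [← reassoc_of% n3]; simp
      _ = (η ▷ F.obj X) ≫ μ (𝟙_ C) X ≫ F.map (coev ▷ X) ≫ F.map (α_ X Y X).hom ≫
            F.map (X ◁ ev) ≫ δ X (𝟙_ C) ≫ (F.obj X ◁ ν) := by rw [n4]; simp
      _ = (η ▷ F.obj X) ≫ μ (𝟙_ C) X ≫ F.map ((coev ▷ X) ≫ (α_ X Y X).hom ≫ (X ◁ ev)) ≫
            δ X (𝟙_ C) ≫ (F.obj X ◁ ν) := by simp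
      _ = ((η ▷ F.obj X) ≫ μ (𝟙_ C) X ≫ F.map (λ_ X).hom) ≫
            (F.map (ρ_ X).inv ≫ δ X (𝟙_ C) ≫ (F.obj X ◁ ν)) := by rw [zig₂]; simp
      _ = (λ_ (F.obj X)).hom ≫ (ρ_ (F.obj X)).inv := by
          rw [μ_unit_left, δ_unit_right]
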